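/- Under the assumptions of the preceding theorem (Wasserstein contractive P, E_p(x₀) < ∞), if additionally ∫ E_1(x)^{p₀} π(dx) < ∞ for some p₀ ≥ 1, then the unique solution u ∈ L₀ of Poisson's equation u - Pu = f satisfies the pointwise bound |u(x)| ≤ Λ·‖f‖_d·E_1(x) for all x, and consequently ∫ |u|^{p₀} dπ ≤ (Λ‖f‖_d)^{p₀} ∫ E_1^{p₀} dπ. -/

import Mathlib

open MeasureTheory ProbabilityTheory ENNReal Filter

noncomputable section

/-- `η` is a coupling of `μ` and `ν`. -/
def IsCoupling {X : Type*} [MeasurableSpace X] (η : Measure (X × X)) (μ ν : Measure X) : Prop :=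
  η.map Prod.fst = μ ∧ η.map Prod.snd = ν

/-- The 1-Wasserstein distance between two measures, w.r.t. the metric of `X`. -/
def wass {X : Type*} [MeasurableSpace X] [MetricSpace X] (μ ν : Measure X) : ℝ≥0∞ :=
  ⨅ η : {η : Measure (X × X) // IsCoupling η μ ν}, ∫⁻ p, edist p.1 p.2 ∂(η : Measure (X × X))

/-- The Kantorovich norm of a Markov kernel. -/
def tau {X : Type*} [MeasurableSpace X] [MetricSpace X] (K : Kernel X X) : ℝ≥0∞ :=
  ⨆ (x : X) (y : X) (_ : x ≠ y), wass (K x) (K y) / edist x y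

/-- The `p`-eccentricity of `π` at `x₀`. -/
def ecc {X : Type*} [MeasurableSpace X] [MetricSpace X] (π : Measure X) (p : ℝ) (x₀ : X) : ℝ≥0∞ :=
  ∫⁻ y, edist x₀ y ^ p ∂π

/-- The Lipschitz seminorm `‖f‖_d` (valued in `ℝ≥0∞`). -/
def elip {X : Type*} [MetricSpace X] (f : X → ℝ) : ℝ≥0∞ :=
  ⨆ (x : X) (y : X) (_ : x ≠ y), ENNReal.ofReal |f x - f y| / edist x y

/-- Membership in the Banach space `L₀` of centred measurable Lipschitz functions. -/
def MemL0 {X : Type*} [MeasurableSpace X] [MetricSpace X] (π : Measure X) (f : X → ℝ) : Prop :=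
  Measurable f ∧ (∃ L : ℝ, ∀ x y, |f x - f y| ≤ L * dist x y) ∧
    Integrable f π ∧ ∫ x, f x ∂π = 0

/-- Iterates of a Markov kernel. -/
def kpow {X : Type*} [MeasurableSpace X] (P : Kernel X X) : ℕ → Kernel X X
  | 0 => Kernel.id
  | n + 1 => (kpow P n) ∘ₖ P

/-- The first eccentricity `E₁(x) = ∫ d(x,y) π(dy)`. -/
def eccOne {X : Type*} [MeasurableSpace X] [MetricSpace X] (π : Measure X) (x : X) : ℝ≥0∞ :=
  ∫⁻ y, edist x y ∂π

section Aux

set_option linter.unusedSectionVars false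

variable {X : Type*} [MeasurableSpace X] [MetricSpace X] [PolishSpace X] [BorelSpace X]

lemma medist : Measurable (fun p : X × X => edist p.1 p.2) :=
  continuous_edist.measurable

lemma medistx (x : X) : Measurable (fun z : X => edist x z) :=
  (continuous_const.edist continuous_id).measurable

lemma wass_le_cost {μ ν : Measure X} {η : Measure (X × X)} (hη : IsCoupling η μ ν) :
    wass μ ν ≤ ∫⁻ p, edist p.1 p.2 ∂η :=
  iInf_le (fun η : {η : Measure (X × X) // IsCoupling η μ ν} =>
    ∫⁻ p, edist p.1 p.2 ∂(η : Measure (X × X))) ⟨η, hη⟩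

lemma wass_self (μ : Measure X) [IsProbabilityMeasure μ] : wass μ μ = 0 := by
  have hdiag : Measurable (fun x : X => (x, x)) := measurable_id.prodMk measurable_id
  have hc : IsCoupling (μ.map fun x => (x, x)) μ μ := by
    constructor
    · rw [Measure.map_map measurable_fst hdiag]; simp [Function.comp_def]
    · rw [Measure.map_map measurable_snd hdiag]; simp [Function.comp_def]
  refine le_antisymm ?_ (zero_le)
  refine le_trans (wass_le_cost hc) ?_
  rw [lintegral_map medist hdiag]
  simp

lemma wass_le_tau_mul (K : Kernel X X) [IsMarkovKernel K] (x y : X) :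
    wass (K x) (K y) ≤ tau K * edist x y := by
  rcases eq_or_ne x y with rfl | hxy
  · simp [wass_self]
  · have h1 : wass (K x) (K y) / edist x y ≤ tau K :=
      le_iSup_of_le x (le_iSup_of_le y (le_iSup_of_le hxy le_rfl))
    calc wass (K x) (K y)
        = wass (K x) (K y) / edist x y * edist x y :=
          (ENNReal.div_mul_cancel (edist_pos.mpr hxy).ne' (edist_ne_top x y)).symm
      _ ≤ tau K * edist x y := mul_le_mul_left h1 _

lemma ofReal_abs_sub_le_elip_mul (f : X → ℝ) (x y : X) :
    ENNReal.ofReal |f x - f y| ≤ elip f * edist x y := by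
  rcases eq_or_ne x y with rfl | hxy
  · simp
  · have h1 : ENNReal.ofReal |f x - f y| / edist x y ≤ elip f :=
      le_iSup_of_le x (le_iSup_of_le y (le_iSup_of_le hxy le_rfl))
    calc ENNReal.ofReal |f x - f y|
        = ENNReal.ofReal |f x - f y| / edist x y * edist x y :=
          (ENNReal.div_mul_cancel (edist_pos.mpr hxy).ne' (edist_ne_top x y)).symm
      _ ≤ elip f * edist x y := mul_le_mul_left h1 _

lemma elip_le_ofReal {f : X → ℝ} {L : ℝ} (hL : ∀ x y, |f x - f y| ≤ L * dist x y) :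
    elip f ≤ ENNReal.ofReal L := by
  refine iSup_le fun x => iSup_le fun y => iSup_le fun hxy => ?_
  rw [ENNReal.div_le_iff_le_mul (Or.inl (edist_pos.mpr hxy).ne') (Or.inl (edist_ne_top x y))]
  have hL0 : 0 ≤ L := by
    have h := hL x y
    have hd : 0 < dist x y := dist_pos.mpr hxy
    nlinarith [abs_nonneg (f x - f y)]
  calc ENNReal.ofReal |f x - f y| ≤ ENNReal.ofReal (L * dist x y) :=
        ENNReal.ofReal_le_ofReal (hL x y)
    _ = ENNReal.ofReal L * edist x y := by
        rw [ENNReal.ofReal_mul hL0, edist_dist]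

lemma lintegral_le_add_wass {μ ν : Measure X} {g : X → ℝ≥0∞} (hg : Measurable g)
    (hlip : ∀ a b, g a ≤ g b + edist a b) :
    ∫⁻ z, g z ∂μ ≤ (∫⁻ z, g z ∂ν) + wass μ ν := by
  have key : ∀ η : {η : Measure (X × X) // IsCoupling η μ ν},
      ∫⁻ z, g z ∂μ ≤ (∫⁻ z, g z ∂ν) + ∫⁻ p, edist p.1 p.2 ∂(η : Measure (X × X)) := by
    rintro ⟨η, hfst, hsnd⟩
    calc ∫⁻ z, g z ∂μ = ∫⁻ p, g p.1 ∂η := by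
          rw [← hfst, lintegral_map hg measurable_fst]
      _ ≤ ∫⁻ p, g p.2 + edist p.1 p.2 ∂η := lintegral_mono fun p => hlip _ _
      _ = (∫⁻ p, g p.2 ∂η) + ∫⁻ p, edist p.1 p.2 ∂η :=
          lintegral_add_right _ medist
      _ = (∫⁻ z, g z ∂ν) + ∫⁻ p, edist p.1 p.2 ∂η := by
          rw [← hsnd, lintegral_map hg measurable_snd]
  calc ∫⁻ z, g z ∂μ
      ≤ ⨅ η : {η : Measure (X × X) // IsCoupling η μ ν},
          ((∫⁻ z, g z ∂ν) + ∫⁻ p, edist p.1 p.2 ∂(η : Measure (X × X))) := le_iInf key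
    _ = (∫⁻ z, g z ∂ν) + wass μ ν := by rw [wass, ENNReal.add_iInf]

lemma integral_bind_real {Y : Type*} [MeasurableSpace Y]
    {μ : Measure X} {K : X → Measure Y} (hK : Measurable K)
    {g : Y → ℝ} (hg : Measurable g) (hint : Integrable g (μ.bind K)) :
    ∫ y, g y ∂(μ.bind K) = ∫ x, ∫ y, g y ∂(K x) ∂μ := by
  have hApos : Measurable fun x => ∫⁻ y, ENNReal.ofReal (g y) ∂(K x) :=
    (Measure.measurable_lintegral hg.ennreal_ofReal).comp hK
  have hAneg : Measurable fun x => ∫⁻ y, ENNReal.ofReal (-g y) ∂(K x) :=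
    (Measure.measurable_lintegral hg.neg.ennreal_ofReal).comp hK
  have hnn : Measurable fun x => ∫⁻ y, ‖g y‖₊ ∂(K x) :=
    (Measure.measurable_lintegral hg.enorm).comp hK
  have hbind_nn : ∫⁻ y, ‖g y‖₊ ∂(μ.bind K) = ∫⁻ x, ∫⁻ y, ‖g y‖₊ ∂(K x) ∂μ :=
    Measure.lintegral_bind hK.aemeasurable hg.enorm.aemeasurable
  have hfin : (∫⁻ x, ∫⁻ y, ‖g y‖₊ ∂(K x) ∂μ) ≠ ∞ := by
    rw [← hbind_nn]; exact hint.2.ne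
  have hae : ∀ᵐ x ∂μ, Integrable g (K x) := by
    filter_upwards [ae_lt_top hnn hfin] with x hx
    exact ⟨hg.aestronglyMeasurable, hx⟩
  have hposle : ∀ y : Y, ENNReal.ofReal (g y) ≤ (‖g y‖₊ : ℝ≥0∞) := by
    intro y
    rw [← enorm_eq_nnnorm, Real.enorm_eq_ofReal_abs]
    exact ENNReal.ofReal_le_ofReal (le_abs_self _)
  have hnegle : ∀ y : Y, ENNReal.ofReal (-g y) ≤ (‖g y‖₊ : ℝ≥0∞) := by
    intro y
    rw [← enorm_eq_nnnorm, Real.enorm_eq_ofReal_abs]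
    exact ENNReal.ofReal_le_ofReal (neg_le_abs _)
  have hposfin : (∫⁻ x, ∫⁻ y, ENNReal.ofReal (g y) ∂(K x) ∂μ) ≠ ∞ :=
    ne_top_of_le_ne_top hfin (lintegral_mono fun x => lintegral_mono fun y => hposle y)
  have hnegfin : (∫⁻ x, ∫⁻ y, ENNReal.ofReal (-g y) ∂(K x) ∂μ) ≠ ∞ :=
    ne_top_of_le_ne_top hfin (lintegral_mono fun x => lintegral_mono fun y => hnegle y)
  rw [integral_eq_lintegral_pos_part_sub_lintegral_neg_part hint,
    Measure.lintegral_bind hK.aemeasurable hg.ennreal_ofReal.aemeasurable,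
    Measure.lintegral_bind (f := fun y => ENNReal.ofReal (-g y)) hK.aemeasurable
      hg.neg.ennreal_ofReal.aemeasurable]
  have hcong : ∫ x, ∫ y, g y ∂(K x) ∂μ =
      ∫ x, ((∫⁻ y, ENNReal.ofReal (g y) ∂(K x)).toReal
            - (∫⁻ y, ENNReal.ofReal (-g y) ∂(K x)).toReal) ∂μ := by
    refine integral_congr_ae ?_
    filter_upwards [hae] with x hx
    exact integral_eq_lintegral_pos_part_sub_lintegral_neg_part hx
  have intA : Integrable (fun x => (∫⁻ y, ENNReal.ofReal (g y) ∂(K x)).toReal) μ :=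
    integrable_toReal_of_lintegral_ne_top hApos.aemeasurable hposfin
  have intB : Integrable (fun x => (∫⁻ y, ENNReal.ofReal (-g y) ∂(K x)).toReal) μ :=
    integrable_toReal_of_lintegral_ne_top hAneg.aemeasurable hnegfin
  rw [hcong, integral_sub intA intB,
    integral_toReal hApos.aemeasurable (ae_lt_top hApos hposfin),
    integral_toReal hAneg.aemeasurable (ae_lt_top hAneg hnegfin)]

lemma kantorovich_easy {μ ν : Measure X} [IsProbabilityMeasure μ] [IsProbabilityMeasure ν]
    {g : X → ℝ} (hg : Measurable g) (hμ : Integrable g μ) (hν : Integrable g ν)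
    {L : ℝ} (hL : ∀ x y, |g x - g y| ≤ L * dist x y) :
    ENNReal.ofReal |(∫ z, g z ∂μ) - ∫ z, g z ∂ν| ≤ elip g * wass μ ν := by
  have helip : elip g ≠ ∞ :=
    ne_top_of_le_ne_top ENNReal.ofReal_ne_top (elip_le_ofReal hL)
  have key : ∀ η : Measure (X × X), IsCoupling η μ ν →
      ENNReal.ofReal |(∫ z, g z ∂μ) - ∫ z, g z ∂ν| ≤ elip g * ∫⁻ p, edist p.1 p.2 ∂η := by
    rintro η ⟨hfst, hsnd⟩
    have hη1 : Integrable (fun p : X × X => g p.1) η := by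
      rw [← hfst] at hμ
      exact (integrable_map_measure hg.aestronglyMeasurable measurable_fst.aemeasurable).mp hμ
    have hη2 : Integrable (fun p : X × X => g p.2) η := by
      rw [← hsnd] at hν
      exact (integrable_map_measure hg.aestronglyMeasurable measurable_snd.aemeasurable).mp hν
    have hΔ : (∫ z, g z ∂μ) - ∫ z, g z ∂ν = ∫ p, (g p.1 - g p.2) ∂η := by
      rw [← hfst, ← hsnd, integral_map measurable_fst.aemeasurable hg.aestronglyMeasurable,
        integral_map measurable_snd.aemeasurable hg.aestronglyMeasurable,
        ← integral_sub hη1 hη2]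
    rw [hΔ]
    calc ENNReal.ofReal |∫ p, (g p.1 - g p.2) ∂η|
        ≤ ENNReal.ofReal (∫ p, |g p.1 - g p.2| ∂η) := by
          refine ENNReal.ofReal_le_ofReal ?_
          simpa [Real.norm_eq_abs] using
            norm_integral_le_integral_norm (fun p : X × X => g p.1 - g p.2) (μ := η)
      _ = ∫⁻ p, ENNReal.ofReal |g p.1 - g p.2| ∂η := by
          have hsub : Integrable (fun p : X × X => |g p.1 - g p.2|) η := by
            simpa using (hη1.sub hη2).abs
          rw [ofReal_integral_eq_lintegral_ofReal hsub
            (Filter.Eventually.of_forall fun p => abs_nonneg _)]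
      _ ≤ ∫⁻ p, elip g * edist p.1 p.2 ∂η :=
          lintegral_mono fun p => ofReal_abs_sub_le_elip_mul g p.1 p.2
      _ = elip g * ∫⁻ p, edist p.1 p.2 ∂η := lintegral_const_mul _ medist
  rcases eq_or_ne (elip g) 0 with h0 | h0
  · have hXne : Nonempty X := by
      by_contra h
      have h1 : μ Set.univ = 1 := measure_univ
      rw [Set.univ_eq_empty_iff.mpr (not_nonempty_iff.mp h)] at h1
      simp at h1
    obtain ⟨z₀⟩ := hXne
    have hconst : ∀ z, g z = g z₀ := by
      intro z
      have h2 := ofReal_abs_sub_le_elip_mul g z z₀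
      rw [h0, zero_mul, nonpos_iff_eq_zero, ENNReal.ofReal_eq_zero] at h2
      have h3 := abs_nonpos_iff.mp h2
      linarith [sub_eq_zero.mp h3]
    have : (∫ z, g z ∂μ) = ∫ z, g z ∂ν := by
      rw [integral_congr_ae (Filter.Eventually.of_forall hconst),
        integral_congr_ae (Filter.Eventually.of_forall hconst)]
      simp
    simp [this]
  · have hdiv : ∀ η : {η : Measure (X × X) // IsCoupling η μ ν},
        ENNReal.ofReal |(∫ z, g z ∂μ) - ∫ z, g z ∂ν| / elip g ≤
          ∫⁻ p, edist p.1 p.2 ∂(η : Measure (X × X)) := by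
      rintro ⟨η, hη⟩
      rw [ENNReal.div_le_iff_le_mul (Or.inl h0) (Or.inl helip)]
      exact (key η hη).trans_eq (mul_comm _ _)
    have h4 : ENNReal.ofReal |(∫ z, g z ∂μ) - ∫ z, g z ∂ν| / elip g ≤ wass μ ν := le_iInf hdiv
    rw [ENNReal.div_le_iff_le_mul (Or.inl h0) (Or.inl helip)] at h4
    exact h4.trans_eq (mul_comm _ _)

instance kpow_markov (P : Kernel X X) [IsMarkovKernel P] (n : ℕ) :
    IsMarkovKernel (kpow P n) := by
  induction n with
  | zero => rw [kpow]; infer_instance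
  | succ n ih => rw [kpow]; infer_instance

lemma kpow_apply_succ (P : Kernel X X) [IsMarkovKernel P] (n : ℕ) (x : X) :
    kpow P (n + 1) x = (P x).bind (kpow P n) := by
  rw [kpow, Kernel.comp_apply]

lemma kpow_add (P : Kernel X X) [IsMarkovKernel P] (a b : ℕ) :
    kpow P (a + b) = (kpow P a) ∘ₖ (kpow P b) := by
  induction b with
  | zero => simp [kpow, Kernel.comp_id]
  | succ b ih =>
      have h : a + (b + 1) = (a + b) + 1 := by omega
      rw [h, kpow, ih, kpow, Kernel.comp_assoc]

lemma measurable_eccOne (π : Measure X) [SFinite π] : Measurable (eccOne π) := by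
  have h : Measurable (Function.uncurry fun x y : X => edist x y) := medist
  exact Measurable.lintegral_kernel_prod_right (κ := Kernel.const X π) h

lemma bind_kpow {π : Measure X} {P : Kernel X X} [IsMarkovKernel P]
    (hinv : π.bind P = π) (n : ℕ) : π.bind (kpow P n) = π := by
  induction n with
  | zero =>
      have h : ⇑(kpow P 0 : Kernel X X) = fun x => Measure.dirac x := by
        funext x; rw [kpow, Kernel.id_apply]
      rw [h]
      exact Measure.bind_dirac
  | succ n ih =>
      have h : ⇑(kpow P (n + 1)) = fun x => (P x).bind (kpow P n) := by
        funext x; exact kpow_apply_succ P n x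
      rw [h, ← Measure.bind_bind (Kernel.measurable P).aemeasurable (Kernel.measurable _).aemeasurable, hinv, ih]

lemma eccOne_lip (π : Measure X) [IsProbabilityMeasure π] (x z : X) :
    eccOne π z ≤ eccOne π x + edist x z := by
  calc eccOne π z = ∫⁻ y, edist z y ∂π := rfl
    _ ≤ ∫⁻ y, edist x y + edist x z ∂π := by
        refine lintegral_mono fun y => ?_
        calc edist z y ≤ edist z x + edist x y := edist_triangle _ _ _
          _ = edist x y + edist x z := by rw [edist_comm z x]; ring
    _ = eccOne π x + edist x z := by
        rw [lintegral_add_right _ measurable_const, lintegral_const, measure_univ, mul_one]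
        rfl

lemma moment_one {π : Measure X} [IsProbabilityMeasure π] {P : Kernel X X} [IsMarkovKernel P]
    (hinv : π.bind P = π) (x : X) :
    ∫⁻ z, edist x z ∂(P x) ≤ (1 + tau P) * eccOne π x := by
  have hlip : ∀ a b : X, edist x a ≤ edist x b + edist a b := fun a b => by
    calc edist x a ≤ edist x b + edist b a := edist_triangle _ _ _
      _ = edist x b + edist a b := by rw [edist_comm b a]
  have h1 : ∀ y : X, ∫⁻ z, edist x z ∂(P x) ≤ (∫⁻ z, edist x z ∂(P y)) + tau P * edist x y :=
    fun y => (lintegral_le_add_wass (medistx x) hlip).trans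
      (add_le_add_right (wass_le_tau_mul P x y) _)
  have hm : Measurable fun y => ∫⁻ z, edist x z ∂(P y) :=
    Measurable.lintegral_kernel (medistx x)
  calc ∫⁻ z, edist x z ∂(P x)
      = ∫⁻ _, (∫⁻ z, edist x z ∂(P x)) ∂π := by rw [lintegral_const, measure_univ, mul_one]
    _ ≤ ∫⁻ y, ((∫⁻ z, edist x z ∂(P y)) + tau P * edist x y) ∂π :=
        lintegral_mono fun y => h1 y
    _ = (∫⁻ y, (∫⁻ z, edist x z ∂(P y)) ∂π) + tau P * eccOne π x := by
        rw [lintegral_add_left hm, lintegral_const_mul _ (medistx x)]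
        rfl
    _ = eccOne π x + tau P * eccOne π x := by
        rw [← Measure.lintegral_bind (Kernel.measurable P).aemeasurable (medistx x).aemeasurable, hinv]
        rfl
    _ = (1 + tau P) * eccOne π x := by ring

lemma moment_n {π : Measure X} [IsProbabilityMeasure π] {P : Kernel X X} [IsMarkovKernel P]
    (hinv : π.bind P = π) (htau : tau P ≠ ∞) (n : ℕ) :
    ∃ C : ℝ≥0∞, C ≠ ∞ ∧ ∀ x, ∫⁻ z, edist x z ∂(kpow P n x) ≤ C * eccOne π x := by
  induction n with
  | zero =>
      refine ⟨0, by simp, fun x => ?_⟩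
      have h : (kpow P 0 : Kernel X X) x = Measure.dirac x := by rw [kpow, Kernel.id_apply]
      rw [h, lintegral_dirac' _ (medistx x)]
      simp
  | succ n ih =>
      obtain ⟨C, hC, hCle⟩ := ih
      refine ⟨(1 + C) * (1 + tau P) + C, ?_, fun x => ?_⟩
      · exact ENNReal.add_ne_top.mpr ⟨ENNReal.mul_ne_top
          (ENNReal.add_ne_top.mpr ⟨one_ne_top, hC⟩)
          (ENNReal.add_ne_top.mpr ⟨one_ne_top, htau⟩), hC⟩
      · have hb : kpow P (n + 1) x = (P x).bind (kpow P n) := kpow_apply_succ P n x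
        rw [hb, Measure.lintegral_bind (Kernel.measurable _).aemeasurable (medistx x).aemeasurable]
        have step1 : ∀ z : X, ∫⁻ w, edist x w ∂(kpow P n z) ≤
            edist x z + C * (eccOne π x + edist x z) := by
          intro z
          calc ∫⁻ w, edist x w ∂(kpow P n z)
              ≤ ∫⁻ w, (edist x z + edist z w) ∂(kpow P n z) :=
                lintegral_mono fun w => edist_triangle _ _ _
            _ = edist x z + ∫⁻ w, edist z w ∂(kpow P n z) := by
                rw [lintegral_add_left measurable_const, lintegral_const, measure_univ, mul_one]
            _ ≤ edist x z + C * eccOne π z := add_le_add_right (hCle z) _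
            _ ≤ edist x z + C * (eccOne π x + edist x z) := by
                refine add_le_add_right (mul_le_mul_right ?_ C) _
                exact eccOne_lip π x z
        calc ∫⁻ z, (∫⁻ w, edist x w ∂(kpow P n z)) ∂(P x)
            ≤ ∫⁻ z, (edist x z + C * (eccOne π x + edist x z)) ∂(P x) :=
              lintegral_mono step1
          _ = (∫⁻ z, edist x z ∂(P x)) + C * (eccOne π x + ∫⁻ z, edist x z ∂(P x)) := by
              rw [lintegral_add_left (medistx x),
                lintegral_const_mul _ (f := fun z => eccOne π x + edist x z) ((measurable_const).add (medistx x)),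
                lintegral_add_left measurable_const, lintegral_const, measure_univ, mul_one]
          _ ≤ ((1 + tau P) * eccOne π x) + C * (eccOne π x + (1 + tau P) * eccOne π x) := by
              have h1 := moment_one hinv x
              exact add_le_add h1 (mul_le_mul_right (add_le_add_right h1 _) C)
          _ = ((1 + C) * (1 + tau P) + C) * eccOne π x := by ring

lemma integrable_dist_of {μ : Measure X} {x' : X}
    (hM : (∫⁻ z, edist x' z ∂μ) ≠ ∞) : Integrable (fun z => dist x' z) μ := by
  refine ⟨(Measurable.dist measurable_const measurable_id).aestronglyMeasurable, ?_⟩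
  rw [hasFiniteIntegral_iff_norm]
  have h : ∀ z : X, ENNReal.ofReal ‖dist x' z‖ = edist x' z := by
    intro z
    rw [Real.norm_eq_abs, abs_of_nonneg dist_nonneg, edist_dist]
  simp_rw [h]
  exact hM.lt_top

lemma integrable_of_lip {μ : Measure X} [IsProbabilityMeasure μ] {x' : X}
    (hM : (∫⁻ z, edist x' z ∂μ) ≠ ∞) {g : X → ℝ} (hg : Measurable g)
    {L : ℝ} (hL : ∀ a b, |g a - g b| ≤ L * dist a b) : Integrable g μ := by
  have hd : Integrable (fun z => dist x' z) μ := integrable_dist_of hM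
  have hbound : Integrable (fun z => |g x'| + L * dist x' z) μ :=
    (integrable_const _).add (hd.const_mul L)
  refine hbound.mono' hg.aestronglyMeasurable ?_
  refine Filter.Eventually.of_forall fun z => ?_
  rw [Real.norm_eq_abs]
  have h1 : |g z| - |g x'| ≤ |g z - g x'| := abs_sub_abs_le_abs_sub _ _
  have h2 : |g z - g x'| ≤ L * dist z x' := hL z x'
  rw [dist_comm x' z]
  linarith

end Aux

/-- under the assumptions of the previous theorem, if additionally
`∫ E₁^{p₀} dπ < ∞`, the unique solution `u ∈ L₀` of Poisson's equation satisfies the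
pointwise bound `|u(x)| ≤ Λ ‖f‖_d E₁(x)` and `∫|u|^{p₀} dπ ≤ (Λ‖f‖_d)^{p₀} ∫ E₁^{p₀} dπ`. -/
theorem poisson_solution_Lp_bound {X : Type*} [MeasurableSpace X] [MetricSpace X]
    [PolishSpace X] [BorelSpace X]
    (π : Measure X) [IsProbabilityMeasure π]
    (P : Kernel X X) [IsMarkovKernel P] (hinv : π.bind P = π)
    (htau : tau P < ∞) (m : ℕ) (hm : 0 < m) (hcontr : tau (kpow P m) < 1)
    (p : ℝ) (hp : 1 ≤ p) (x₀ : X) (hE : ecc π p x₀ < ∞)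
    (p₀ : ℝ) (hp₀ : 1 ≤ p₀) (hE₁ : (∫⁻ x, eccOne π x ^ p₀ ∂π) < ∞)
    (f : X → ℝ) (hf : MemL0 π f) :
    ∃ u : X → ℝ,
      (MemL0 π u ∧ ∀ x, u x - ∫ y, u y ∂(P x) = f x) ∧
      (∀ x, ENNReal.ofReal |u x| ≤ (∑' n : ℕ, tau (kpow P n)) * elip f * eccOne π x) ∧
      (∫⁻ x, ENNReal.ofReal |u x| ^ p₀ ∂π) ≤
        ((∑' n : ℕ, tau (kpow P n)) * elip f) ^ p₀ * ∫⁻ x, eccOne π x ^ p₀ ∂π ∧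
      ∀ v : X → ℝ, (MemL0 π v ∧ ∀ x, v x - ∫ y, v y ∂(P x) = f x) → v = u := by
  classical
  obtain ⟨hfmeas, ⟨L₀, hL₀⟩, hfint, hfzero⟩ := hf
  set L' : ℝ := max L₀ 0 with hL'def
  have hL'0 : 0 ≤ L' := le_max_right _ _
  have hflip : ∀ x y, |f x - f y| ≤ L' * dist x y := fun x y =>
    (hL₀ x y).trans (mul_le_mul_of_nonneg_right (le_max_left _ _) dist_nonneg)
  have htau' : tau P ≠ ∞ := htau.ne
  -- E₁ is finite everywhere
  have hEx₀ : eccOne π x₀ ≠ ∞ := by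
    have hpt : ∀ y : X, edist x₀ y ≤ 1 + edist x₀ y ^ p := by
      intro y
      rcases le_total (edist x₀ y) 1 with h | h
      · exact h.trans le_self_add
      · have h1 : edist x₀ y = edist x₀ y ^ (1 : ℝ) := (ENNReal.rpow_one _).symm
        calc edist x₀ y = edist x₀ y ^ (1 : ℝ) := h1
          _ ≤ edist x₀ y ^ p := ENNReal.rpow_le_rpow_of_exponent_le h hp
          _ ≤ 1 + edist x₀ y ^ p := le_add_self
    have hle : eccOne π x₀ ≤ 1 + ecc π p x₀ := by
      calc eccOne π x₀ ≤ ∫⁻ y, (1 + edist x₀ y ^ p) ∂π := lintegral_mono hpt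
        _ = 1 + ecc π p x₀ := by
            rw [lintegral_add_left measurable_const, lintegral_const, measure_univ, mul_one]
            rfl
    exact ne_top_of_le_ne_top (ENNReal.add_ne_top.mpr ⟨one_ne_top, hE.ne⟩) hle
  have hEfin : ∀ x, eccOne π x ≠ ∞ := fun x =>
    ne_top_of_le_ne_top (ENNReal.add_ne_top.mpr ⟨hEx₀, edist_ne_top _ _⟩) (eccOne_lip π x₀ x)
  -- moments are finite
  have hMfin : ∀ (n : ℕ) (x : X), (∫⁻ z, edist x z ∂(kpow P n x)) ≠ ∞ := by
    intro n x
    obtain ⟨C, hC, hCle⟩ := moment_n hinv htau' n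
    exact ne_top_of_le_ne_top (ENNReal.mul_ne_top hC (hEfin x)) (hCle x)
  have hM1fin : ∀ x : X, (∫⁻ z, edist x z ∂(P x)) ≠ ∞ := fun x =>
    ne_top_of_le_ne_top
      (ENNReal.mul_ne_top (ENNReal.add_ne_top.mpr ⟨one_ne_top, htau'⟩) (hEfin x))
      (moment_one hinv x)
  -- the sequence g n = P^n f
  set g : ℕ → X → ℝ := fun n x => ∫ z, f z ∂(kpow P n x) with hgdef
  have hg0 : ∀ x, g 0 x = f x := by
    intro x
    have h : (kpow P 0 : Kernel X X) x = Measure.dirac x := by rw [kpow, Kernel.id_apply]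
    show (∫ z, f z ∂(kpow P 0 x)) = f x
    rw [h, integral_dirac]
  have hgmeas : ∀ n, Measurable (g n) := by
    intro n
    have hsm : StronglyMeasurable (Function.uncurry fun (_ : X) (y : X) => f y) :=
      (hfmeas.comp measurable_snd).stronglyMeasurable
    exact (MeasureTheory.StronglyMeasurable.integral_kernel_prod_right
      (κ := kpow P n) hsm).measurable
  have hfintK : ∀ (n : ℕ) (x : X), Integrable f (kpow P n x) := fun n x =>
    integrable_of_lip (hMfin n x) hfmeas hflip
  have hgrec : ∀ (n : ℕ) (x : X), g (n + 1) x = ∫ z, g n z ∂(P x) := by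
    intro n x
    have hb : kpow P (n + 1) x = (P x).bind (kpow P n) := kpow_apply_succ P n x
    have hint : Integrable f ((P x).bind (kpow P n)) := by rw [← hb]; exact hfintK (n + 1) x
    show (∫ z, f z ∂(kpow P (n + 1) x)) = _
    rw [hb, integral_bind_real (Kernel.measurable _) hfmeas hint]
  have hgshift : ∀ (n : ℕ) (x : X), g (n + m) x = ∫ z, g n z ∂(kpow P m x) := by
    intro n x
    have hb : kpow P (n + m) x = (kpow P m x).bind (kpow P n) := by
      rw [kpow_add P n m, Kernel.comp_apply]
    have hint : Integrable f ((kpow P m x).bind (kpow P n)) := by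
      rw [← hb]; exact hfintK (n + m) x
    show (∫ z, f z ∂(kpow P (n + m) x)) = _
    rw [hb, integral_bind_real (Kernel.measurable _) hfmeas hint]
  -- contraction constants
  set T : ℝ := (tau P).toReal with hTdef
  have hT0 : 0 ≤ T := ENNReal.toReal_nonneg
  have hTle : tau P ≤ ENNReal.ofReal T := by rw [hTdef, ENNReal.ofReal_toReal htau']
  set t : ℝ := (tau (kpow P m)).toReal with htdef
  have ht0 : 0 ≤ t := ENNReal.toReal_nonneg
  have htne : tau (kpow P m) ≠ ∞ := (hcontr.trans ENNReal.one_lt_top).ne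
  have htle : tau (kpow P m) ≤ ENNReal.ofReal t := by rw [htdef, ENNReal.ofReal_toReal htne]
  have ht1 : t < 1 := by
    rw [htdef]
    have h := ENNReal.toReal_strict_mono ENNReal.one_ne_top hcontr
    simpa using h
  -- one-step Lipschitz improvement
  have hstep : ∀ (K : Kernel X X) (_ : IsMarkovKernel K) (s : ℝ), 0 ≤ s →
      tau K ≤ ENNReal.ofReal s →
      ∀ (h : X → ℝ), Measurable h → ∀ (cc : ℝ), 0 ≤ cc →
      (∀ x y, |h x - h y| ≤ cc * dist x y) →
      (∀ x, (∫⁻ z, edist x z ∂(K x)) ≠ ∞) →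
      ∀ x y, |(∫ z, h z ∂(K x)) - ∫ z, h z ∂(K y)| ≤ (cc * s) * dist x y := by
    intro K hK s hs0 hs h hmeas cc hcc hLiph hMK x y
    haveI := hK
    have hintx : Integrable h (K x) := integrable_of_lip (hMK x) hmeas hLiph
    have hinty : Integrable h (K y) := integrable_of_lip (hMK y) hmeas hLiph
    have h1 := kantorovich_easy hmeas hintx hinty hLiph
    have h2 : elip h ≤ ENNReal.ofReal cc := elip_le_ofReal hLiph
    have h3 : wass (K x) (K y) ≤ ENNReal.ofReal s * edist x y :=
      (wass_le_tau_mul K x y).trans (mul_le_mul_left hs _)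
    have h4 : ENNReal.ofReal |(∫ z, h z ∂(K x)) - ∫ z, h z ∂(K y)| ≤
        ENNReal.ofReal ((cc * s) * dist x y) := by
      calc ENNReal.ofReal |(∫ z, h z ∂(K x)) - ∫ z, h z ∂(K y)|
          ≤ elip h * wass (K x) (K y) := h1
        _ ≤ ENNReal.ofReal cc * (ENNReal.ofReal s * edist x y) := mul_le_mul' h2 h3
        _ = ENNReal.ofReal ((cc * s) * dist x y) := by
            rw [edist_dist, ← ENNReal.ofReal_mul hs0, ← ENNReal.ofReal_mul hcc, mul_assoc]
    have h5 : (0:ℝ) ≤ (cc * s) * dist x y := by positivity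
    exact (ENNReal.ofReal_le_ofReal_iff h5).mp h4
  have hbaseLip : ∀ (r : ℕ) (x y : X), |g r x - g r y| ≤ (L' * T ^ r) * dist x y := by
    intro r
    induction r with
    | zero =>
        intro x y
        rw [hg0 x, hg0 y]
        simpa using hflip x y
    | succ r ih =>
        intro x y
        have h := hstep P inferInstance T hT0 hTle (g r) (hgmeas r) (L' * T ^ r)
          (by positivity) ih hM1fin x y
        rw [hgrec r x, hgrec r y]
        calc |(∫ z, g r z ∂(P x)) - ∫ z, g r z ∂(P y)| ≤ (L' * T ^ r * T) * dist x y := h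
          _ = (L' * T ^ (r + 1)) * dist x y := by ring
  have hshiftLip : ∀ (n : ℕ) (cc : ℝ), 0 ≤ cc → (∀ x y, |g n x - g n y| ≤ cc * dist x y) →
      ∀ x y, |g (n + m) x - g (n + m) y| ≤ (cc * t) * dist x y := by
    intro n cc hcc hlip x y
    have h := hstep (kpow P m) inferInstance t ht0 htle (g n) (hgmeas n) cc hcc hlip
      (hMfin m) x y
    rw [hgshift n x, hgshift n y]
    exact h
  set c : ℕ → ℝ := fun n => L' * T ^ (n % m) * t ^ (n / m) with hcdef
  have hc0 : ∀ n, 0 ≤ c n := fun n => by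
    rw [hcdef]; positivity
  have hlipg : ∀ (n : ℕ) (x y : X), |g n x - g n y| ≤ c n * dist x y := by
    have haux : ∀ (q r : ℕ) (x y : X),
        |g (r + q * m) x - g (r + q * m) y| ≤ ((L' * T ^ r) * t ^ q) * dist x y := by
      intro q
      induction q with
      | zero => intro r x y; simpa using hbaseLip r x y
      | succ q ih =>
          intro r x y
          have h1 : r + (q + 1) * m = (r + q * m) + m := by ring
          rw [h1]
          have h := hshiftLip (r + q * m) ((L' * T ^ r) * t ^ q) (by positivity) (ih r) x y
          calc |g (r + q * m + m) x - g (r + q * m + m) y|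
              ≤ ((L' * T ^ r) * t ^ q * t) * dist x y := h
            _ = ((L' * T ^ r) * t ^ (q + 1)) * dist x y := by ring
    intro n x y
    have h1 : n % m + (n / m) * m = n := Nat.mod_add_div' n m
    have h := haux (n / m) (n % m) x y
    rw [h1] at h
    calc |g n x - g n y| ≤ ((L' * T ^ (n % m)) * t ^ (n / m)) * dist x y := h
      _ = c n * dist x y := by rw [hcdef]
  -- summability of the Lipschitz constants
  have hcsum : Summable c := by
    rcases eq_or_lt_of_le ht0 with h0 | h0
    · refine summable_of_ne_finset_zero (s := Finset.range (m + 1)) ?_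
      intro n hn
      have hnm : m ≤ n := by
        simp only [Finset.mem_range, not_lt] at hn; omega
      have hdiv : 0 < n / m := Nat.div_pos hnm hm
      rw [hcdef]
      simp only
      rw [← h0, zero_pow hdiv.ne', mul_zero]
    · set r : ℝ := t ^ (1 / (m : ℝ)) with hrdef
      have hr0 : 0 ≤ r := Real.rpow_nonneg ht0 _
      have hr1 : r < 1 := Real.rpow_lt_one ht0 ht1 (by positivity)
      have hmpos : (0:ℝ) < (m:ℝ) := by exact_mod_cast hm
      have hb : ∀ n, c n ≤ ((L' * max T 1 ^ m) * t⁻¹) * r ^ n := by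
        intro n
        have h1 : T ^ (n % m) ≤ max T 1 ^ m := by
          calc T ^ (n % m) ≤ (max T 1) ^ (n % m) :=
              pow_le_pow_left₀ hT0 (le_max_left _ _) _
            _ ≤ (max T 1) ^ m :=
              pow_le_pow_right₀ (le_max_right _ _) (le_of_lt (Nat.mod_lt n hm))
        have h2 : t ^ (n / m) ≤ t⁻¹ * r ^ n := by
          have hnat : n < m * (n / m) + m := by
            have hdm := Nat.div_add_mod n m
            have hmod := Nat.mod_lt n hm
            omega
          have hcast : (n : ℝ) < (m : ℝ) * ((n / m : ℕ) : ℝ) + (m : ℝ) := by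
            exact_mod_cast hnat
          have hq : (n : ℝ) / (m : ℝ) - 1 ≤ ((n / m : ℕ) : ℝ) := by
            rw [div_sub' hmpos.ne', div_le_iff₀ hmpos]
            nlinarith
          calc t ^ (n / m) = t ^ (((n / m : ℕ)) : ℝ) := (Real.rpow_natCast t _).symm
            _ ≤ t ^ ((n : ℝ) / (m : ℝ) - 1) :=
                Real.rpow_le_rpow_of_exponent_ge h0 ht1.le hq
            _ = t⁻¹ * r ^ n := by
                rw [hrdef, ← Real.rpow_natCast (t ^ (1 / (m:ℝ))) n, ← Real.rpow_mul ht0,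
                  Real.rpow_sub h0, Real.rpow_one, div_eq_inv_mul]
                congr 2
                field_simp
        calc c n = L' * T ^ (n % m) * t ^ (n / m) := by rw [hcdef]
          _ ≤ L' * max T 1 ^ m * (t⁻¹ * r ^ n) := by
              have ht' : 0 ≤ t ^ (n / m) := by positivity
              refine mul_le_mul (mul_le_mul_of_nonneg_left h1 hL'0) h2 ht' ?_
              positivity
          _ = ((L' * max T 1 ^ m) * t⁻¹) * r ^ n := by ring
      refine Summable.of_nonneg_of_le hc0 hb ?_
      exact (summable_geometric_of_lt_one hr0 hr1).mul_left _
  set S : ℝ := ∑' n, c n with hSdef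
  have hS0 : 0 ≤ S := tsum_nonneg hc0
  -- integrability of g n with respect to π, and centring
  have hgintπ : ∀ n, Integrable (g n) π := fun n =>
    integrable_of_lip (hEfin x₀) (hgmeas n) (hlipg n)
  have hgzero : ∀ n, ∫ x, g n x ∂π = 0 := by
    intro n
    have hb : Integrable f (π.bind (kpow P n)) := by rw [bind_kpow hinv n]; exact hfint
    have h := integral_bind_real (Kernel.measurable (kpow P n)) hfmeas hb
    rw [bind_kpow hinv n] at h
    show ∫ x, (∫ z, f z ∂(kpow P n x)) ∂π = 0
    rw [← h, hfzero]
  have hdistint : ∀ x : X, Integrable (fun y => dist x y) π := fun x =>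
    integrable_dist_of (hEfin x)
  have hdistval : ∀ x : X, ∫ y, dist x y ∂π = (eccOne π x).toReal := by
    intro x
    have hmd : AEStronglyMeasurable (fun y => dist x y) π :=
      (medistx x).ennreal_toReal.aestronglyMeasurable.congr
        (Filter.Eventually.of_forall fun y => by simp [edist_dist, ENNReal.toReal_ofReal dist_nonneg])
    rw [integral_eq_lintegral_of_nonneg_ae (Filter.Eventually.of_forall fun y => dist_nonneg) hmd]
    congr 1
    refine lintegral_congr fun y => ?_
    exact (edist_dist x y).symm
  have hrepr : ∀ (n : ℕ) (x : X), g n x = ∫ y, (g n x - g n y) ∂π := by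
    intro n x
    rw [integral_sub (integrable_const _) (hgintπ n), hgzero n, integral_const]
    simp [measure_univ]
  have hgbound : ∀ (n : ℕ) (x : X), |g n x| ≤ c n * (eccOne π x).toReal := by
    intro n x
    calc |g n x| = |∫ y, (g n x - g n y) ∂π| := by rw [← hrepr n x]
      _ ≤ ∫ y, |g n x - g n y| ∂π := by
          simpa [Real.norm_eq_abs] using
            norm_integral_le_integral_norm (fun y => g n x - g n y) (μ := π)
      _ ≤ ∫ y, c n * dist x y ∂π := by
          refine integral_mono ?_ ((hdistint x).const_mul _) ?_
          · simpa using ((integrable_const (g n x)).sub (hgintπ n)).abs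
          · intro y; exact hlipg n x y
      _ = c n * (eccOne π x).toReal := by rw [integral_const_mul, hdistval]
  -- summability of the series defining u
  have habs_sum : ∀ x, Summable (fun n => |g n x|) := fun x =>
    Summable.of_nonneg_of_le (fun n => abs_nonneg _) (fun n => hgbound n x)
      (hcsum.mul_right _)
  have hsummable : ∀ x, Summable fun n => g n x := fun x => (habs_sum x).of_abs
  set u : X → ℝ := fun x => ∑' n, g n x with hudef
  -- u is Lipschitz
  have hulip : ∀ x y, |u x - u y| ≤ S * dist x y := by
    intro x y
    have hdiff : ∑' n, (g n x - g n y) = u x - u y :=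
      ((hsummable x).hasSum.sub (hsummable y).hasSum).tsum_eq
    rw [← hdiff]
    have hnormsum : Summable fun n => |g n x - g n y| :=
      Summable.of_nonneg_of_le (fun n => abs_nonneg _) (fun n => hlipg n x y)
        (hcsum.mul_right _)
    calc |∑' n, (g n x - g n y)| ≤ ∑' n, |g n x - g n y| := by
          simpa [Real.norm_eq_abs] using
            norm_tsum_le_tsum_norm (f := fun n => g n x - g n y)
              (by simpa [Real.norm_eq_abs] using hnormsum)
      _ ≤ ∑' n, c n * dist x y :=
          Summable.tsum_le_tsum (fun n => hlipg n x y) hnormsum (hcsum.mul_right _)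
      _ = S * dist x y := by rw [tsum_mul_right]
  have humeas : Measurable u := by
    refine measurable_of_tendsto_metrizable
      (f := fun k x => ∑ n ∈ Finset.range k, g n x) (fun k => ?_) ?_
    · exact Finset.measurable_sum _ (fun n _ => hgmeas n)
    · rw [tendsto_pi_nhds]
      intro x
      exact (hsummable x).hasSum.tendsto_sum_nat
  have huint : Integrable u π := integrable_of_lip (hEfin x₀) humeas hulip
  -- ∫ u dπ = 0
  have hcsum_en : (∑' n, ENNReal.ofReal (c n)) = ENNReal.ofReal S :=
    (ENNReal.ofReal_tsum_of_nonneg hc0 hcsum).symm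
  have hnn_le : ∀ (n : ℕ) (x : X), (‖g n x‖₊ : ℝ≥0∞) ≤ ENNReal.ofReal (c n) * eccOne π x := by
    intro n x
    rw [← enorm_eq_nnnorm, Real.enorm_eq_ofReal_abs]
    calc ENNReal.ofReal |g n x| ≤ ENNReal.ofReal (c n * (eccOne π x).toReal) :=
        ENNReal.ofReal_le_ofReal (hgbound n x)
      _ = ENNReal.ofReal (c n) * ENNReal.ofReal ((eccOne π x).toReal) :=
          ENNReal.ofReal_mul (hc0 n)
      _ ≤ ENNReal.ofReal (c n) * eccOne π x :=
          mul_le_mul_right ENNReal.ofReal_toReal_le _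
  have htsum_norm : ∀ (μ' : Measure X), (∫⁻ x, eccOne π x ∂μ') ≠ ∞ →
      (∑' n, ∫⁻ x, ‖g n x‖₊ ∂μ') ≠ ∞ := by
    intro μ' hfin
    have h1 : ∀ n : ℕ, (∫⁻ x, (‖g n x‖₊ : ℝ≥0∞) ∂μ') ≤
        ENNReal.ofReal (c n) * ∫⁻ x, eccOne π x ∂μ' := by
      intro n
      calc ∫⁻ x, (‖g n x‖₊ : ℝ≥0∞) ∂μ' ≤ ∫⁻ x, ENNReal.ofReal (c n) * eccOne π x ∂μ' :=
          lintegral_mono (hnn_le n)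
        _ = _ := lintegral_const_mul _ (measurable_eccOne π)
    have h2 : (∑' n, ∫⁻ x, (‖g n x‖₊ : ℝ≥0∞) ∂μ') ≤
        ENNReal.ofReal S * ∫⁻ x, eccOne π x ∂μ' := by
      calc (∑' n, ∫⁻ x, (‖g n x‖₊ : ℝ≥0∞) ∂μ')
          ≤ ∑' n, ENNReal.ofReal (c n) * ∫⁻ x, eccOne π x ∂μ' := ENNReal.tsum_le_tsum h1
        _ = (∑' n, ENNReal.ofReal (c n)) * ∫⁻ x, eccOne π x ∂μ' := ENNReal.tsum_mul_right
        _ = _ := by rw [hcsum_en]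
    exact ne_top_of_le_ne_top (ENNReal.mul_ne_top ENNReal.ofReal_ne_top hfin) h2
  have hB : (∫⁻ x, eccOne π x ∂π) ≠ ∞ := by
    have h1 : (∫⁻ x, eccOne π x ∂π) ≤ eccOne π x₀ + eccOne π x₀ := by
      calc (∫⁻ x, eccOne π x ∂π) ≤ ∫⁻ x, (eccOne π x₀ + edist x₀ x) ∂π :=
          lintegral_mono fun x => eccOne_lip π x₀ x
        _ = eccOne π x₀ + eccOne π x₀ := by
            rw [lintegral_add_left measurable_const, lintegral_const, measure_univ, mul_one]
            rfl
    exact ne_top_of_le_ne_top (ENNReal.add_ne_top.mpr ⟨hEx₀, hEx₀⟩) h1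
  have huzero : ∫ x, u x ∂π = 0 := by
    have h := integral_tsum (f := fun (n : ℕ) (x : X) => g n x) (μ := π)
      (fun n => (hgmeas n).aestronglyMeasurable) (htsum_norm π hB)
    show ∫ x, (∑' n, g n x) ∂π = 0
    rw [h]
    simp [hgzero]
  -- Poisson equation
  have hBP : ∀ x : X, (∫⁻ z, eccOne π z ∂(P x)) ≠ ∞ := by
    intro x
    have h1 : (∫⁻ z, eccOne π z ∂(P x)) ≤ eccOne π x + ∫⁻ z, edist x z ∂(P x) := by
      calc (∫⁻ z, eccOne π z ∂(P x)) ≤ ∫⁻ z, (eccOne π x + edist x z) ∂(P x) :=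
          lintegral_mono fun z => eccOne_lip π x z
        _ = eccOne π x + ∫⁻ z, edist x z ∂(P x) := by
            rw [lintegral_add_left measurable_const, lintegral_const, measure_univ, mul_one]
    exact ne_top_of_le_ne_top (ENNReal.add_ne_top.mpr ⟨hEfin x, hM1fin x⟩) h1
  have hupoisson : ∀ x, u x - ∫ y, u y ∂(P x) = f x := by
    intro x
    have h := integral_tsum (f := fun (n : ℕ) (y : X) => g n y) (μ := P x)
      (fun n => (hgmeas n).aestronglyMeasurable) (htsum_norm (P x) (hBP x))
    have h2 : ∫ y, u y ∂(P x) = ∑' n, g (n + 1) x := by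
      calc ∫ y, u y ∂(P x) = ∑' n, ∫ y, g n y ∂(P x) := h
        _ = ∑' n, g (n + 1) x := tsum_congr fun n => (hgrec n x).symm
    have h3 : u x = g 0 x + ∑' n, g (n + 1) x := Summable.tsum_eq_zero_add (hsummable x)
    rw [h2, h3, hg0 x]
    ring
  -- pointwise bound
  have hofbound : ∀ (n : ℕ) (x : X),
      ENNReal.ofReal |g n x| ≤ tau (kpow P n) * elip f * eccOne π x := by
    intro n x
    have hker : ∀ y : X, ENNReal.ofReal |g n x - g n y| ≤
        elip f * (tau (kpow P n) * edist x y) := by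
      intro y
      have h1 : ENNReal.ofReal |g n x - g n y| ≤ elip f * wass (kpow P n x) (kpow P n y) :=
        kantorovich_easy hfmeas (hfintK n x) (hfintK n y) hflip
      exact h1.trans (mul_le_mul_right (wass_le_tau_mul _ x y) _)
    calc ENNReal.ofReal |g n x|
        = ENNReal.ofReal |∫ y, (g n x - g n y) ∂π| := by rw [← hrepr n x]
      _ ≤ ENNReal.ofReal (∫ y, |g n x - g n y| ∂π) := by
          refine ENNReal.ofReal_le_ofReal ?_
          simpa [Real.norm_eq_abs] using
            norm_integral_le_integral_norm (fun y => g n x - g n y) (μ := π)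
      _ = ∫⁻ y, ENNReal.ofReal |g n x - g n y| ∂π := by
          refine ofReal_integral_eq_lintegral_ofReal ?_
            (Filter.Eventually.of_forall fun y => abs_nonneg _)
          simpa using ((integrable_const (g n x)).sub (hgintπ n)).abs
      _ ≤ ∫⁻ y, elip f * (tau (kpow P n) * edist x y) ∂π := lintegral_mono hker
      _ = elip f * (tau (kpow P n) * eccOne π x) := by
          rw [lintegral_const_mul _ ((medistx x).const_mul _),
            lintegral_const_mul _ (medistx x)]
          rfl
      _ = tau (kpow P n) * elip f * eccOne π x := by ring
  have hptwise : ∀ x, ENNReal.ofReal |u x| ≤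
      (∑' n : ℕ, tau (kpow P n)) * elip f * eccOne π x := by
    intro x
    calc ENNReal.ofReal |u x| ≤ ENNReal.ofReal (∑' n, |g n x|) := by
          refine ENNReal.ofReal_le_ofReal ?_
          simpa [Real.norm_eq_abs] using
            norm_tsum_le_tsum_norm (f := fun n => g n x)
              (by simpa [Real.norm_eq_abs] using habs_sum x)
      _ = ∑' n, ENNReal.ofReal |g n x| :=
          ENNReal.ofReal_tsum_of_nonneg (fun n => abs_nonneg _) (habs_sum x)
      _ ≤ ∑' n, tau (kpow P n) * (elip f * eccOne π x) := by
          refine ENNReal.tsum_le_tsum fun n => ?_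
          rw [← mul_assoc]
          exact hofbound n x
      _ = (∑' n : ℕ, tau (kpow P n)) * (elip f * eccOne π x) := ENNReal.tsum_mul_right
      _ = (∑' n : ℕ, tau (kpow P n)) * elip f * eccOne π x := by rw [mul_assoc]
  -- Lp bound
  have hp₀0 : (0:ℝ) ≤ p₀ := le_trans zero_le_one hp₀
  have hLp : (∫⁻ x, ENNReal.ofReal |u x| ^ p₀ ∂π) ≤
      ((∑' n : ℕ, tau (kpow P n)) * elip f) ^ p₀ * ∫⁻ x, eccOne π x ^ p₀ ∂π := by
    calc (∫⁻ x, ENNReal.ofReal |u x| ^ p₀ ∂π)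
        ≤ ∫⁻ x, ((∑' n : ℕ, tau (kpow P n)) * elip f * eccOne π x) ^ p₀ ∂π :=
          lintegral_mono fun x => ENNReal.rpow_le_rpow (hptwise x) hp₀0
      _ = ∫⁻ x, ((∑' n : ℕ, tau (kpow P n)) * elip f) ^ p₀ * eccOne π x ^ p₀ ∂π := by
          refine lintegral_congr fun x => ?_
          rw [ENNReal.mul_rpow_of_nonneg _ _ hp₀0]
      _ = _ := lintegral_const_mul _
          (ENNReal.continuous_rpow_const.measurable.comp (measurable_eccOne π))
  -- uniqueness
  have huniq : ∀ v : X → ℝ, (MemL0 π v ∧ ∀ x, v x - ∫ y, v y ∂(P x) = f x) → v = u := by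
    rintro v ⟨⟨hvmeas, ⟨Lv, hLv⟩, hvint, hvzero⟩, hvps⟩
    set w : X → ℝ := fun x => v x - u x with hwdef
    have hwmeas : Measurable w := hvmeas.sub humeas
    set Lw : ℝ := max Lv 0 + S with hLwdef
    have hLw0 : 0 ≤ Lw := add_nonneg (le_max_right _ _) hS0
    have hwlip : ∀ x y, |w x - w y| ≤ Lw * dist x y := by
      intro x y
      have h1 : |v x - v y| ≤ max Lv 0 * dist x y :=
        (hLv x y).trans (mul_le_mul_of_nonneg_right (le_max_left _ _) dist_nonneg)
      have h2 := hulip x y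
      have h3 : w x - w y = (v x - v y) - (u x - u y) := by rw [hwdef]; ring
      calc |w x - w y| = |(v x - v y) - (u x - u y)| := by rw [h3]
        _ ≤ |v x - v y| + |u x - u y| := abs_sub _ _
        _ ≤ Lw * dist x y := by rw [hLwdef]; nlinarith
    have hwint : ∀ (n : ℕ) (x : X), Integrable w (kpow P n x) := fun n x =>
      integrable_of_lip (hMfin n x) hwmeas hwlip
    have hwP : ∀ x, w x = ∫ y, w y ∂(P x) := by
      intro x
      have hvI : Integrable v (P x) := integrable_of_lip (hM1fin x) hvmeas hLv
      have huI : Integrable u (P x) := integrable_of_lip (hM1fin x) humeas hulip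
      calc w x = (∫ y, v y ∂(P x)) - ∫ y, u y ∂(P x) := by
            have hv := hvps x
            have hu := hupoisson x
            rw [hwdef]
            simp only
            linarith
        _ = ∫ y, (v y - u y) ∂(P x) := (integral_sub hvI huI).symm
    have hwn : ∀ (n : ℕ), ∀ x, w x = ∫ y, w y ∂(kpow P n x) := by
      intro n
      induction n with
      | zero =>
          intro x
          have h : (kpow P 0 : Kernel X X) x = Measure.dirac x := by rw [kpow, Kernel.id_apply]
          rw [h, integral_dirac]
      | succ n ih =>
          intro x
          have hb : kpow P (n + 1) x = (P x).bind (kpow P n) := kpow_apply_succ P n x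
          have hbi : Integrable w ((P x).bind (kpow P n)) := by
            rw [← hb]; exact hwint (n + 1) x
          calc w x = ∫ z, w z ∂(P x) := hwP x
            _ = ∫ z, (∫ y, w y ∂(kpow P n z)) ∂(P x) :=
                integral_congr_ae (Filter.Eventually.of_forall fun z => ih z)
            _ = ∫ y, w y ∂((P x).bind (kpow P n)) :=
                (integral_bind_real (Kernel.measurable _) hwmeas hbi).symm
            _ = ∫ y, w y ∂(kpow P (n + 1) x) := by rw [← hb]
    have hcontract : ∀ (q : ℕ) (x y : X), |w x - w y| ≤ (Lw * t ^ q) * dist x y := by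
      intro q
      induction q with
      | zero => intro x y; simpa using hwlip x y
      | succ q ih =>
          intro x y
          have h2 := hstep (kpow P m) inferInstance t ht0 htle w hwmeas (Lw * t ^ q)
            (by positivity) ih (hMfin m) x y
          calc |w x - w y|
              = |(∫ z, w z ∂(kpow P m x)) - ∫ z, w z ∂(kpow P m y)| := by
                rw [← hwn m x, ← hwn m y]
            _ ≤ (Lw * t ^ q * t) * dist x y := h2
            _ = (Lw * t ^ (q + 1)) * dist x y := by ring
    have hwconst : ∀ x y, w x = w y := by
      intro x y
      have hlim : Tendsto (fun q : ℕ => (Lw * t ^ q) * dist x y) atTop (nhds 0) := by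
        have h1 := (tendsto_pow_atTop_nhds_zero_of_lt_one ht0 ht1).const_mul Lw
        have h2 := h1.mul_const (dist x y)
        simpa using h2
      have hle : |w x - w y| ≤ 0 :=
        ge_of_tendsto' hlim (fun q => hcontract q x y)
      have := abs_nonpos_iff.mp hle
      linarith
    have hwzero : ∫ x, w x ∂π = 0 := by
      show ∫ x, (v x - u x) ∂π = 0
      rw [integral_sub hvint huint, hvzero, huzero, sub_zero]
    have hw0 : ∀ x, w x = 0 := by
      intro x
      have h1 : ∫ y, w y ∂π = ∫ y, w x ∂π :=
        integral_congr_ae (Filter.Eventually.of_forall fun y => hwconst y x)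
      rw [hwzero, integral_const, probReal_univ] at h1
      simpa using h1.symm
    funext x
    have h := hw0 x
    rw [hwdef] at h
    simp only at h
    linarith
  exact ⟨u, ⟨⟨humeas, ⟨S, hulip⟩, huint, huzero⟩, hupoisson⟩, hptwise, hLp, huniq⟩
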